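/- For any prime p ≥ 3, in the group G = ⟨s, t | t^{p²} = s^p = 1, s⁻¹ t s = t^{p+1}⟩ with T = ⟨t^p⟩, for every g ∉ T the coset gT equals the conjugacy class of g. -/

import Mathlib

open scoped Pointwise

/-- Relations for the presentation `⟨s, t | t^(p²) = s^p = 1, s⁻¹ t s = t^(p+1)⟩`,
with `s = of 0` and `t = of 1`. -/
def heisRels (p : ℕ) : Set (FreeGroup (Fin 2)) :=
  {FreeGroup.of 1 ^ (p ^ 2), FreeGroup.of 0 ^ p,
    (FreeGroup.of 0)⁻¹ * FreeGroup.of 1 * FreeGroup.of 0 * (FreeGroup.of 1 ^ (p + 1))⁻¹}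

namespace Heis

variable {p : ℕ}

abbrev G (p : ℕ) := PresentedGroup (heisRels p)
abbrev s : G p := PresentedGroup.of 0
abbrev t : G p := PresentedGroup.of 1

lemma rel_one {r : FreeGroup (Fin 2)} (hr : r ∈ heisRels p) :
    PresentedGroup.mk (heisRels p) r = 1 :=
  (QuotientGroup.eq_one_iff r).mpr (Subgroup.subset_normalClosure hr)

lemma R1 : (t : G p) ^ (p ^ 2) = 1 := by
  have := rel_one (p := p) (r := FreeGroup.of 1 ^ (p ^ 2)) (by left; rfl)
  rw [map_pow] at this; exact this

lemma R2 : (s : G p) ^ p = 1 := by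
  have := rel_one (p := p) (r := FreeGroup.of 0 ^ p) (by right; left; rfl)
  rw [map_pow] at this; exact this

lemma R3 : (s : G p)⁻¹ * t * s = t ^ (p + 1) := by
  have := rel_one (p := p)
    (r := (FreeGroup.of 0)⁻¹ * FreeGroup.of 1 * FreeGroup.of 0 * (FreeGroup.of 1 ^ (p + 1))⁻¹)
    (by right; right; rfl)
  simp only [map_mul, map_inv, map_pow] at this
  have h : ((s : G p)⁻¹ * t * s) * (t ^ (p+1))⁻¹ = 1 := this
  calc (s : G p)⁻¹ * t * s = ((s : G p)⁻¹ * t * s) * (t ^ (p+1))⁻¹ * t ^ (p+1) := by group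
    _ = t ^ (p+1) := by rw [h]; group

end Heis

namespace Heis2
open Heis

variable {p : ℕ}

lemma R3' : (t : G p) * s = s * t ^ (p + 1) := by
  have h := R3 (p := p)
  calc (t : G p) * s = s * ((s : G p)⁻¹ * t * s) := by group
    _ = s * t ^ (p+1) := by rw [h]

lemma conj_s_pow (a : ℕ) : (s : G p)⁻¹ * t ^ a * s = t ^ (a * (p + 1)) := by
  have h := conj_pow (a := (s : G p)⁻¹) (b := t) (i := a)
  rw [inv_inv] at h
  rw [← h, R3, ← pow_mul, mul_comm (p+1) a]

lemma tpow_s (a : ℕ) : (t : G p) ^ a * s = s * t ^ (a * (p + 1)) := by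
  rw [← conj_s_pow]; group

lemma t_order_cong {a b : ℕ} (h : a ≡ b [MOD p ^ 2]) : (t : G p) ^ a = t ^ b := by
  have hd : orderOf (t : G p) ∣ p ^ 2 := orderOf_dvd_of_pow_eq_one R1
  exact (pow_eq_pow_iff_modEq).mpr (h.of_dvd hd)

lemma binom (hp : 0 < p) : (p + 1) ^ p ≡ 1 [MOD p ^ 2] := by
  have : (((p + 1) ^ p : ℕ) : ZMod (p ^ 2)) = ((1 : ℕ) : ZMod (p ^ 2)) := by
    push_cast
    rw [add_pow]
    rw [show (Finset.range (p+1)) = Finset.range 2 ∪ (Finset.range (p+1) \ Finset.range 2) from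
      (Finset.union_sdiff_of_subset (by
        apply Finset.range_subset_range.mpr; omega)).symm]
    rw [Finset.sum_union (Finset.disjoint_sdiff)]
    have h2 : ∀ i ∈ Finset.range (p+1) \ Finset.range 2,
        (p : ZMod (p^2)) ^ i * 1 ^ (p - i) * (p.choose i : ZMod (p^2)) = 0 := by
      intro i hi
      simp only [Finset.mem_sdiff, Finset.mem_range] at hi
      have : (p : ZMod (p^2)) ^ i = 0 := by
        obtain ⟨j, rfl⟩ : ∃ j, i = 2 + j := ⟨i - 2, by omega⟩
        rw [pow_add]
        have : (p : ZMod (p^2)) ^ 2 = 0 := by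
          rw [← Nat.cast_pow, ZMod.natCast_self]
        rw [this, zero_mul]
      rw [this, zero_mul, zero_mul]
    rw [Finset.sum_eq_zero h2, add_zero]
    rw [Finset.sum_range_succ, Finset.sum_range_one]
    simp only [pow_zero, one_pow, Nat.choose_zero_right, Nat.cast_one, mul_one, one_mul,
      pow_one, Nat.choose_one_right]
    rw [← Nat.cast_mul, ← pow_two, ZMod.natCast_self, add_zero]
  exact (ZMod.natCast_eq_natCast_iff _ _ _).mp this


lemma SW1 (a b : ℕ) : (t : G p) ^ a * s ^ b = s ^ b * t ^ (a * (p + 1) ^ b) := by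
  induction b with
  | zero => simp
  | succ b ih =>
    rw [pow_succ, ← mul_assoc, ih, mul_assoc, tpow_s, ← mul_assoc, ← pow_succ]
    congr 1
    rw [mul_assoc, ← pow_succ]

lemma SW2 (hp : 0 < p) (a b : ℕ) :
    (s : G p) ^ b * t ^ a = t ^ (a * (p + 1) ^ (b * (p - 1))) * s ^ b := by
  have h := SW1 (p := p) (a := a * (p + 1) ^ (b * (p - 1))) (b := b)
  rw [h]
  congr 1
  apply t_order_cong
  have he : a * (p + 1) ^ (b * (p - 1)) * (p + 1) ^ b = a * ((p + 1) ^ p) ^ b := by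
    rw [mul_assoc, ← pow_add, ← Nat.mul_succ, show (p-1).succ = p by omega, ← pow_mul,
      mul_comm b p, pow_mul]
  have : a * ((p + 1) ^ p) ^ b ≡ a * 1 ^ b [MOD p ^ 2] :=
    Nat.ModEq.mul_left a ((binom hp).pow b)
  simp only [one_pow, mul_one] at this
  exact (he ▸ this).symm

lemma s_inv (hp : 0 < p) : (s : G p)⁻¹ = s ^ (p - 1) := by
  apply inv_eq_of_mul_eq_one_right
  rw [← pow_succ', show (p - 1) + 1 = p from by omega, R2]

lemma t_inv (hp : 0 < p) : (t : G p)⁻¹ = t ^ (p ^ 2 - 1) := by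
  have h2 : 0 < p ^ 2 := pow_pos hp 2
  apply inv_eq_of_mul_eq_one_right
  rw [← pow_succ', show (p ^ 2 - 1) + 1 = p ^ 2 from by omega, R1]

lemma NF (hp : 0 < p) (g : G p) : ∃ a b : ℕ, g = t ^ a * s ^ b := by
  let H : Subgroup (G p) :=
    { carrier := {g : G p | ∃ a b : ℕ, g = t ^ a * s ^ b}
      one_mem' := ⟨0, 0, by simp⟩
      mul_mem' := by
        rintro x y ⟨a, b, rfl⟩ ⟨c, d, rfl⟩
        refine ⟨a + c * (p + 1) ^ (b * (p - 1)), b + d, ?_⟩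
        rw [pow_add, pow_add]
        calc t ^ a * s ^ b * (t ^ c * s ^ d)
            = t ^ a * (s ^ b * t ^ c) * s ^ d := by group
          _ = t ^ a * (t ^ (c * (p + 1) ^ (b * (p - 1))) * s ^ b) * s ^ d := by rw [SW2 hp]
          _ = t ^ a * t ^ (c * (p + 1) ^ (b * (p - 1))) * (s ^ b * s ^ d) := by group
      inv_mem' := by
        rintro x ⟨a, b, rfl⟩
        refine ⟨(p ^ 2 - 1) * a * (p + 1) ^ (((p - 1) * b) * (p - 1)), (p - 1) * b, ?_⟩
        rw [mul_inv_rev, ← inv_pow, ← inv_pow, s_inv hp, t_inv hp, ← pow_mul, ← pow_mul,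
          SW2 hp] }
  refine PresentedGroup.generated_by _ H (fun j => ?_) g
  fin_cases j
  · exact ⟨0, 1, by simp⟩
  · exact ⟨1, 0, by simp⟩


lemma central (hp : 0 < p) (g : G p) : Commute g ((t : G p) ^ p) := by
  have h2 : (t : G p) ^ (p * (p + 1)) = t ^ p := by
    apply t_order_cong
    have he : p * (p + 1) = p ^ 2 + p := by ring
    rw [he]
    simpa using (Nat.modEq_iff_dvd' (Nat.le_add_left p (p ^ 2))).mpr ⟨1, by omega⟩
  have hs : (s : G p) * t ^ p = t ^ p * s := by
    have h1 : (s : G p)⁻¹ * t ^ p * s = t ^ (p * (p + 1)) := conj_s_pow p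
    rw [h2] at h1
    have h3 : (s : G p) * (s⁻¹ * t ^ p * s) = s * t ^ p := by rw [h1]
    rw [show (s : G p) * (s⁻¹ * t ^ p * s) = t ^ p * s from by group] at h3
    exact h3.symm
  have hg : g ∈ Subgroup.centralizer {((t : G p) ^ p)} := by
    refine PresentedGroup.generated_by _ _ (fun j => ?_) g
    fin_cases j
    · refine Subgroup.mem_centralizer_iff.mpr ?_
      rintro a ha
      rw [Set.mem_singleton_iff] at ha
      subst ha
      exact hs.symm
    · refine Subgroup.mem_centralizer_iff.mpr ?_
      rintro a ha
      rw [Set.mem_singleton_iff] at ha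
      subst ha
      exact ((Commute.refl (t : G p)).pow_left p).eq
  exact (Subgroup.mem_centralizer_iff.mp hg _ (Set.mem_singleton _)).symm

lemma normalT (hp : 0 < p) : (Subgroup.zpowers ((t : G p) ^ p)).Normal := by
  constructor
  rintro n ⟨k, rfl⟩ g
  have hc : Commute g (((t : G p) ^ p) ^ k) := (central hp g).zpow_right k
  have : g * ((t : G p) ^ p) ^ k * g⁻¹ = ((t : G p) ^ p) ^ k := by
    rw [hc.eq]; group
  rw [this]
  exact ⟨k, rfl⟩

open scoped commutatorElement in
lemma comm_mem (hp : 0 < p) (x y : G p) :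
    x⁻¹ * y⁻¹ * x * y ∈ Subgroup.zpowers ((t : G p) ^ p) := by
  haveI := normalT (p := p) hp
  set T := Subgroup.zpowers ((t : G p) ^ p) with hT
  let π := QuotientGroup.mk' T
  have htp : π ((t : G p) ^ p) = 1 := by
    have : (t : G p) ^ p ∈ T := ⟨1, zpow_one _⟩
    rw [← QuotientGroup.ker_mk' T] at this
    exact this
  have hst : Commute (π s) (π t) := by
    have h1 : (t : G p) * s = s * t * t ^ p := by
      rw [R3']; rw [pow_succ]; group
    have : π (t * s) = π (s * t) := by
      rw [h1, map_mul, htp, mul_one]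
    simpa [Commute, SemiconjBy, map_mul] using this.symm
  have hall : ∀ v : G p, π v ∈ Subgroup.centralizer {π s, π t} := by
    intro v
    refine PresentedGroup.generated_by _ (Subgroup.comap π (Subgroup.centralizer {π s, π t}))
      (fun j => ?_) v
    fin_cases j
    · refine Subgroup.mem_centralizer_iff.mpr ?_
      rintro a (rfl | rfl)
      · rfl
      · exact hst.symm.eq
    · refine Subgroup.mem_centralizer_iff.mpr ?_
      rintro a (rfl | rfl)
      · exact hst.eq
      · rfl
  have hcomm : Commute (π x) (π y) := by
    have hx : π x ∈ Subgroup.centralizer {π y} := by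
      refine PresentedGroup.generated_by _ (Subgroup.comap π (Subgroup.centralizer {π y}))
        (fun j => ?_) x
      have hy := Subgroup.mem_centralizer_iff.mp (hall y)
      fin_cases j
      · exact Subgroup.mem_centralizer_iff.mpr (by rintro a rfl; exact (hy _ (by simp)).symm)
      · exact Subgroup.mem_centralizer_iff.mpr (by rintro a rfl; exact (hy _ (by simp)).symm)
    exact (Subgroup.mem_centralizer_iff.mp hx _ rfl).symm
  have h1 : ⁅(π x)⁻¹, (π y)⁻¹⁆ = 1 := commutatorElement_eq_one_iff_commute.mpr hcomm.inv_inv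
  have h2 : π (x⁻¹ * y⁻¹ * x * y) = 1 := by
    rw [map_mul, map_mul, map_mul, map_inv, map_inv]
    rw [commutatorElement_def] at h1
    simpa using h1
  exact (QuotientGroup.eq_one_iff _).mp h2


lemma conj_t (hp : 0 < p) (a b : ℕ) :
    (t : G p) * (t ^ a * s ^ b) * t⁻¹ = (t ^ a * s ^ b) * ((t : G p) ^ p) ^ b := by
  have hts : (t : G p) * s * t⁻¹ = s * t ^ p := by
    rw [R3', pow_succ]; group
  have hb : (t : G p) * s ^ b * t⁻¹ = s ^ b * ((t : G p) ^ p) ^ b := by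
    have h := conj_pow (a := (t : G p)) (b := (s : G p)) (i := b)
    rw [← h, hts, (central hp s).mul_pow]
  calc (t : G p) * (t ^ a * s ^ b) * t⁻¹ = t ^ a * (t * s ^ b * t⁻¹) := by group
    _ = t ^ a * (s ^ b * ((t : G p) ^ p) ^ b) := by rw [hb]
    _ = (t ^ a * s ^ b) * ((t : G p) ^ p) ^ b := by group

lemma conj_sinv (hp : 0 < p) (a b : ℕ) :
    (s : G p)⁻¹ * (t ^ a * s ^ b) * (s⁻¹)⁻¹ = (t ^ a * s ^ b) * ((t : G p) ^ p) ^ a := by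
  rw [inv_inv]
  have h1 : (s : G p)⁻¹ * (t ^ a * s ^ b) * s = (s⁻¹ * t ^ a * s) * s^b := by
    have hc : (s : G p)⁻¹ * s ^ b * s = s ^ b := by group
    calc (s : G p)⁻¹ * (t ^ a * s ^ b) * s
        = (s⁻¹ * t ^ a * s) * (s⁻¹ * s ^ b * s) := by group
      _ = (s⁻¹ * t ^ a * s) * s ^ b := by rw [hc]
  rw [h1, conj_s_pow]
  have h2 : (t : G p) ^ (a * (p + 1)) = t ^ a * ((t : G p) ^ p) ^ a := by
    rw [← pow_mul, ← pow_add]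
    congr 1
    ring
  rw [h2]
  have := (central hp (s ^ b : G p)).pow_right a
  calc (t : G p) ^ a * ((t : G p) ^ p) ^ a * s ^ b
      = t ^ a * (((t : G p) ^ p) ^ a * s ^ b) := by group
    _ = t ^ a * (s ^ b * ((t : G p) ^ p) ^ a) := by rw [this.symm.eq]
    _ = t ^ a * s ^ b * ((t : G p) ^ p) ^ a := by group

lemma conj_iter (hp : 0 < p) {x g : G p} {c : ℕ}
    (h : x * g * x⁻¹ = g * ((t : G p) ^ p) ^ c) (n : ℕ) :
    x ^ n * g * (x ^ n)⁻¹ = g * (((t : G p) ^ p) ^ c) ^ n := by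
  induction n with
  | zero => simp
  | succ n ih =>
    have hc : ∀ w : G p, Commute w ((((t : G p) ^ p) ^ c) ^ n) :=
      fun w => ((central hp w).pow_right c).pow_right n
    calc x ^ (n+1) * g * (x ^ (n+1))⁻¹
        = x * (x ^ n * g * (x ^ n)⁻¹) * x⁻¹ := by rw [pow_succ']; group
      _ = x * (g * (((t : G p) ^ p) ^ c) ^ n) * x⁻¹ := by rw [ih]
      _ = (x * g * x⁻¹) * (((t : G p) ^ p) ^ c) ^ n := by
          have hx := (hc x⁻¹).eq
          calc x * (g * (((t : G p) ^ p) ^ c) ^ n) * x⁻¹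
              = x * g * ((((t : G p) ^ p) ^ c) ^ n * x⁻¹) := by group
            _ = x * g * (x⁻¹ * (((t : G p) ^ p) ^ c) ^ n) := by rw [← hx]
            _ = x * g * x⁻¹ * (((t : G p) ^ p) ^ c) ^ n := by group
      _ = g * ((t : G p) ^ p) ^ c * (((t : G p) ^ p) ^ c) ^ n := by rw [h]
      _ = g * (((t : G p) ^ p) ^ c) ^ (n+1) := by rw [pow_succ']; group

lemma exists_conj (hp : p.Prime) {g : G p} (hg : g ∉ Subgroup.zpowers ((t : G p) ^ p)) :
    ∃ (x : G p) (c : ℕ), ¬ (p ∣ c) ∧ x * g * x⁻¹ = g * ((t : G p) ^ p) ^ c := by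
  have hp0 : 0 < p := hp.pos
  obtain ⟨a, b, rfl⟩ := NF hp0 g
  by_cases hb : p ∣ b
  · obtain ⟨m, rfl⟩ := hb
    have hsb : (s : G p) ^ (p * m) = 1 := by rw [pow_mul, R2, one_pow]
    by_cases ha : p ∣ a
    · exfalso
      obtain ⟨l, rfl⟩ := ha
      refine hg ⟨(l : ℤ), ?_⟩
      show ((t : G p) ^ p) ^ (l : ℤ) = t ^ (p * l) * s ^ (p * m)
      rw [zpow_natCast, ← pow_mul, hsb, mul_one]
    · exact ⟨s⁻¹, a, ha, conj_sinv hp0 a (p * m)⟩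
  · exact ⟨t, b, hb, conj_t hp0 a b⟩

lemma zpow_match (hp : p.Prime) {c : ℕ} (hc : ¬ p ∣ c) (k : ℤ) :
    ∃ n : ℕ, (((t : G p) ^ p) ^ c) ^ n = ((t : G p) ^ p) ^ k := by
  haveI : Fact p.Prime := ⟨hp⟩
  set z := (t : G p) ^ p with hz
  have hzp : z ^ p = 1 := by
    rw [hz, ← pow_mul, show p * p = p ^ 2 from (sq p).symm, R1]
  have hq : (orderOf z : ℤ) ∣ (p : ℤ) :=
    Int.natCast_dvd_natCast.mpr (orderOf_dvd_of_pow_eq_one hzp)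
  set u : ZMod p := (k : ZMod p) * ((c : ZMod p))⁻¹ with hu
  refine ⟨u.val, ?_⟩
  have hc0 : (c : ZMod p) ≠ 0 := fun h0 =>
    hc ((ZMod.natCast_eq_zero_iff c p).mp h0)
  have hcn : (((c * u.val : ℕ) : ℤ) : ZMod p) = ((k : ZMod p)) := by
    push_cast
    rw [ZMod.natCast_zmod_val, hu]
    field_simp
  have hmod : ((c * u.val : ℕ) : ℤ) ≡ k [ZMOD orderOf z] :=
    (((ZMod.intCast_eq_intCast_iff _ _ _).mp hcn)).of_dvd hq
  calc (z ^ c) ^ u.val = z ^ ((c * u.val : ℕ) : ℤ) := by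
        rw [zpow_natCast, ← pow_mul]
    _ = z ^ k := zpow_eq_zpow_iff_modEq.mpr hmod


end Heis2

/-- For a prime `p ≥ 3`, in `G = ⟨s, t | t^(p²) = s^p = 1, s⁻¹ t s = t^(p+1)⟩` with
`T = ⟨t^p⟩`, for every `g ∉ T` the coset `gT` equals the conjugacy class of `g`. -/
theorem coset_eq_conjClass_modular {p : ℕ} (hp : p.Prime) (hp3 : 3 ≤ p) :
    letI G := PresentedGroup (heisRels p)
    letI t : G := PresentedGroup.of 1
    ∀ g : G, g ∉ Subgroup.zpowers (t ^ p) →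
      g • ((Subgroup.zpowers (t ^ p) : Subgroup G) : Set G) = {y | IsConj g y} := by
  intro g hg
  have hp0 : 0 < p := hp.pos
  ext y
  simp only [Set.mem_setOf_eq]
  rw [Set.mem_smul_set_iff_inv_smul_mem, smul_eq_mul, SetLike.mem_coe]
  constructor
  · intro hmem
    obtain ⟨k, hk⟩ := Subgroup.mem_zpowers_iff.mp hmem
    obtain ⟨x, c, hc, hx⟩ := Heis2.exists_conj hp hg
    obtain ⟨n, hn⟩ := Heis2.zpow_match hp hc k
    rw [isConj_iff]
    refine ⟨x ^ n, ?_⟩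
    rw [Heis2.conj_iter hp0 hx n, hn, hk]
    group
  · intro h
    obtain ⟨u, hu⟩ := isConj_iff.mp h
    have hm := Heis2.comm_mem hp0 g u⁻¹
    rw [inv_inv] at hm
    have hy : g⁻¹ * y = g⁻¹ * u * g * u⁻¹ := by rw [← hu]; group
    rw [hy]
    exact hm
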